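/- Let y₁, …, y_t be vectors in ℂ^N with all entries in {0,1}, all having the same Hamming weight (number of 1-entries). Then every vector y in their complex affine hull (i.e., y = Σ wᵢ yᵢ with Σ wᵢ = 1, wᵢ ∈ ℂ) satisfies ‖y‖₂ ≥ ‖y₁‖₂ / √t. -/

import Mathlib

open scoped Classical in
/-- If `y 0, …, y (t-1)` are 0/1 vectors in `ℂ^N` all having the same Hamming weight,
then every vector in their complex affine hull has norm at least `‖y 0‖ / √t`. -/
theorem stmt_0 (N t : ℕ) (ht : 0 < t) (y : Fin t → EuclideanSpace ℂ (Fin N))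
    (h01 : ∀ i j, y i j = 0 ∨ y i j = 1)
    (hweight : ∀ i i' : Fin t,
      (Finset.univ.filter (fun j => y i j = 1)).card
        = (Finset.univ.filter (fun j => y i' j = 1)).card)
    (w : Fin t → ℂ) (hw : ∑ i, w i = 1) :
    ‖y ⟨0, ht⟩‖ / Real.sqrt t ≤ ‖∑ i, w i • y i‖ := by
  set i0 : Fin t := ⟨0, ht⟩
  set k : ℕ := (Finset.univ.filter (fun j => y i0 j = 1)).card with hk
  -- coordinate sums of each y i equal k
  have hsum : ∀ i : Fin t, ∑ j, y i j = (k : ℂ) := by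
    intro i
    have : ∑ j, y i j = ∑ j ∈ Finset.univ.filter (fun j => y i j = 1), (1 : ℂ) := by
      rw [Finset.sum_filter]
      apply Finset.sum_congr rfl
      intro j _
      rcases h01 i j with h | h <;> simp [h]
    rw [this, Finset.sum_const, hweight i i0]
    simp; rfl
  -- norm of y i0
  have hnorm0 : ‖y i0‖ = Real.sqrt k := by
    rw [EuclideanSpace.norm_eq]
    congr 1
    have : ∑ j, ‖y i0 j‖ ^ 2 = ∑ j ∈ Finset.univ.filter (fun j => y i0 j = 1), (1:ℝ) := by
      rw [Finset.sum_filter]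
      apply Finset.sum_congr rfl
      intro j _
      rcases h01 i0 j with h | h <;> simp [h]
    rw [this, Finset.sum_const]; simp; rfl
  set v : EuclideanSpace ℂ (Fin N) := ∑ i, w i • y i with hv
  have hvj : ∀ j, v j = ∑ i, w i * y i j := by
    intro j
    rw [hv]
    rw [WithLp.ofLp_sum]; simp [Finset.sum_apply]
  -- support set
  set S : Finset (Fin N) := Finset.univ.filter (fun j => ∃ i, y i j = 1) with hS
  have hScard : (S.card : ℝ) ≤ t * k := by
    have h1 : S ⊆ Finset.univ.biUnion (fun i : Fin t =>
        Finset.univ.filter (fun j => y i j = 1)) := by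
      intro j hj
      simp only [hS, Finset.mem_filter, Finset.mem_univ, true_and] at hj
      obtain ⟨i, hi⟩ := hj
      simp only [Finset.mem_biUnion]
      exact ⟨i, Finset.mem_univ i, by simp [hi]⟩
    have h2 : S.card ≤ t * k := by
      calc S.card ≤ (Finset.univ.biUnion (fun i : Fin t =>
            Finset.univ.filter (fun j => y i j = 1))).card := Finset.card_le_card h1
        _ ≤ ∑ i : Fin t, (Finset.univ.filter (fun j => y i j = 1)).card :=
            Finset.card_biUnion_le
        _ = ∑ i : Fin t, k := by
            apply Finset.sum_congr rfl; intro i _; exact hweight i i0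
        _ = t * k := by simp [Finset.sum_const, mul_comm]
    exact_mod_cast h2
  -- sum of v over S equals k
  have hvsum : ∑ j ∈ S, v j = (k : ℂ) := by
    have hzero : ∀ j ∉ S, v j = 0 := by
      intro j hj
      simp only [hS, Finset.mem_filter, Finset.mem_univ, true_and, not_exists] at hj
      rw [hvj]
      apply Finset.sum_eq_zero
      intro i _
      rcases h01 i j with h | h
      · simp [h]
      · exact absurd h (hj i)
    rw [Finset.sum_subset (Finset.subset_univ S) (fun j _ hj => hzero j hj)]
    calc ∑ j, v j = ∑ j, ∑ i, w i * y i j := by simp [hvj]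
      _ = ∑ i, w i * ∑ j, y i j := by rw [Finset.sum_comm]; simp [Finset.mul_sum]
      _ = ∑ i, w i * k := by simp [hsum]
      _ = (k : ℂ) := by rw [← Finset.sum_mul, hw, one_mul]
  -- Cauchy-Schwarz
  have hcs : (k : ℝ) ≤ Real.sqrt (t * k) * ‖v‖ := by
    have h1 : (k : ℝ) ≤ ∑ j ∈ S, ‖v j‖ := by
      calc (k : ℝ) = ‖(k : ℂ)‖ := by simp
        _ = ‖∑ j ∈ S, v j‖ := by rw [hvsum]
        _ ≤ ∑ j ∈ S, ‖v j‖ := norm_sum_le _ _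
    have h2 : (∑ j ∈ S, ‖v j‖) ^ 2 ≤ (S.card : ℝ) * ∑ j ∈ S, ‖v j‖ ^ 2 :=
      sq_sum_le_card_mul_sum_sq
    have h3 : ∑ j ∈ S, ‖v j‖ ^ 2 ≤ ‖v‖ ^ 2 := by
      rw [EuclideanSpace.norm_eq, Real.sq_sqrt (by positivity)]
      exact Finset.sum_le_sum_of_subset_of_nonneg (Finset.subset_univ S)
        (fun j _ _ => by positivity)
    have h4 : (∑ j ∈ S, ‖v j‖ ^ 2) ≤ ‖v‖ ^ 2 := h3
    have h5 : ((k : ℝ)) ^ 2 ≤ (t * k) * ‖v‖ ^ 2 := by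
      calc ((k : ℝ)) ^ 2 ≤ (∑ j ∈ S, ‖v j‖) ^ 2 := by
            apply pow_le_pow_left₀ (by positivity) h1
        _ ≤ (S.card : ℝ) * ∑ j ∈ S, ‖v j‖ ^ 2 := h2
        _ ≤ (t * k) * ‖v‖ ^ 2 := by
            apply mul_le_mul hScard h4 (by positivity) (by positivity)
    calc (k : ℝ) = Real.sqrt ((k:ℝ)^2) := by rw [Real.sqrt_sq (by positivity)]
      _ ≤ Real.sqrt ((t * k) * ‖v‖ ^ 2) := Real.sqrt_le_sqrt h5
      _ = Real.sqrt (t * k) * ‖v‖ := by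
          rw [Real.sqrt_mul (by positivity), Real.sqrt_sq (norm_nonneg _)]
  -- finish
  rw [hnorm0, div_le_iff₀ (by positivity)]
  rcases Nat.eq_zero_or_pos k with hk0 | hk0
  · simp [hk0]
    positivity
  · have hsk : (0:ℝ) < Real.sqrt k := Real.sqrt_pos.mpr (by exact_mod_cast hk0)
    rw [Real.sqrt_mul (by positivity), mul_comm (Real.sqrt t)] at hcs
    have : Real.sqrt k * Real.sqrt k ≤ Real.sqrt k * (‖v‖ * Real.sqrt t) := by
      rw [Real.mul_self_sqrt (by positivity)]
      calc (k:ℝ) ≤ Real.sqrt k * Real.sqrt t * ‖v‖ := hcs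
        _ = Real.sqrt k * (‖v‖ * Real.sqrt t) := by ring
    exact le_of_mul_le_mul_left this hsk
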